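/- arXiv:2103.01036 — 3 statements merged into one kernel-verified Lean document; each statement's English description precedes it below -/
import Mathlib

section
/- If A is a 2-step nilpotent algebra of dimension n over a field and k = dim A², then k ≤ n + (1 - √(4n+1))/2; i.e., k is an integer satisfying k² - (2n+1)k + n² ≥ 0 together with k ≤ n, which is equivalent to k ≤ (n-k)². -/
open Module

/-- If `A` is an `n`-dimensional 2-step nilpotent algebra and `k = dim A²`,
then `k ≤ n + (1 - √(4n+1))/2`, i.e. `k ≤ n` and `k² - (2n+1)k + n² ≥ 0`
(equivalently `k ≤ (n-k)²`). -/
theorem two_step_nilpotent_square_dim_bound {F V : Type*} [Field F] [AddCommGroup V]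
    [Module F V] [FiniteDimensional F V] (μ : V →ₗ[F] V →ₗ[F] V)
    (h2 : ∀ x y z : V, μ (μ x y) z = 0 ∧ μ x (μ y z) = 0)
    (n k : ℕ) (hn : n = finrank F V)
    (hk : k = finrank F (Submodule.span F {z : V | ∃ x y : V, μ x y = z})) :
    k ≤ n ∧ (k : ℤ) ^ 2 - (2 * n + 1) * k + n ^ 2 ≥ 0 ∧ k ≤ (n - k) ^ 2 := by
  set W : Submodule F V := Submodule.span F {z : V | ∃ x y : V, μ x y = z} with hW
  have hkn : k ≤ n := by
    rw [hk, hn]; exact Submodule.finrank_le W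
  -- μ vanishes when the left argument is in W
  have hleft : ∀ w ∈ W, μ w = 0 := by
    intro w hw
    refine Submodule.span_induction ?_ ?_ ?_ ?_ hw
    · rintro z ⟨x, y, rfl⟩
      ext u; exact (h2 x y u).1
    · simp
    · intro a b _ _ ha hb; simp [ha, hb]
    · intro c a _ ha; simp [ha]
  have hright : ∀ w ∈ W, ∀ x : V, μ x w = 0 := by
    intro w hw
    refine Submodule.span_induction ?_ ?_ ?_ ?_ hw
    · rintro z ⟨x, y, rfl⟩ u
      exact (h2 u x y).2
    · simp
    · intro a b _ _ ha hb u; simp [ha, hb]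
    · intro c a _ ha u; simp [ha]
  -- lift μ to the quotient in the first argument
  have h1 : W ≤ LinearMap.ker μ := fun w hw => by
    simpa [LinearMap.mem_ker] using hleft w hw
  set μ1 : (V ⧸ W) →ₗ[F] V →ₗ[F] V := W.liftQ μ h1 with hμ1
  -- flip and lift in the second argument
  have h2' : W ≤ LinearMap.ker μ1.flip := fun w hw => by
    rw [LinearMap.mem_ker]
    refine LinearMap.ext fun q => ?_
    obtain ⟨x, rfl⟩ := Submodule.Quotient.mk_surjective W q
    show μ1 (Submodule.Quotient.mk x) w = 0
    simpa [hμ1] using hright w hw x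
  set ν : (V ⧸ W) →ₗ[F] (V ⧸ W) →ₗ[F] V := W.liftQ μ1.flip h2' with hν
  set T : TensorProduct F (V ⧸ W) (V ⧸ W) →ₗ[F] V := TensorProduct.lift ν with hT
  have hWle : W ≤ LinearMap.range T := by
    refine Submodule.span_le.mpr ?_
    rintro z ⟨x, y, rfl⟩
    exact ⟨(Submodule.Quotient.mk y) ⊗ₜ[F] (Submodule.Quotient.mk x), by
      simp [hT, hν, hμ1]⟩
  have hquot : finrank F (V ⧸ W) + finrank F W = finrank F V :=
    Submodule.finrank_quotient_add_finrank W
  have hm : finrank F (V ⧸ W) = n - k := by omega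
  have hbound : k ≤ (n - k) ^ 2 := by
    calc k = finrank F W := hk
      _ ≤ finrank F (LinearMap.range T) := Submodule.finrank_mono hWle
      _ ≤ finrank F (TensorProduct F (V ⧸ W) (V ⧸ W)) := T.finrank_range_le
      _ = (n - k) * (n - k) := by rw [finrank_tensorProduct, hm]
      _ = (n - k) ^ 2 := (sq _).symm
  refine ⟨hkn, ?_, hbound⟩
  have hz : ((n - k : ℕ) : ℤ) = (n : ℤ) - k := by
    exact_mod_cast Int.ofNat_sub hkn
  have : (k : ℤ) ≤ ((n : ℤ) - k) ^ 2 := by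
    rw [← hz]; exact_mod_cast hbound
  nlinarith [this]
end

section
/- Let A be an anticommutative 2-step nilpotent algebra over ℂ of even dimension n with dim A² = 1. Then dim ann(A) ≥ 2. -/
open Module

/-- The two-sided annihilator `ann(A) = {a : aA = Aa = 0}` of the algebra `(V, μ)`. -/
def annihilator {F V : Type*} [Field F] [AddCommGroup V] [Module F V]
    (μ : V →ₗ[F] V →ₗ[F] V) : Submodule F V where
  carrier := {a | ∀ x : V, μ a x = 0 ∧ μ x a = 0}
  zero_mem' := fun x => by simp
  add_mem' := fun {a b} ha hb x => by
    constructor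
    · simp [map_add, LinearMap.add_apply, (ha x).1, (hb x).1]
    · simp [map_add, (ha x).2, (hb x).2]
  smul_mem' := fun c a ha x => by
    constructor
    · simp [map_smul, LinearMap.smul_apply, (ha x).1]
    · simp [map_smul, (ha x).2]

lemma skew_degenerate_of_odd {W : Type*} [AddCommGroup W] [Module ℂ W]
    [FiniteDimensional ℂ W] (B : W →ₗ[ℂ] W →ₗ[ℂ] ℂ)
    (hB : ∀ x y : W, B x y = - B y x) (hodd : Odd (finrank ℂ W)) :
    ∃ w : W, w ≠ 0 ∧ ∀ x : W, B w x = 0 := by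
  by_contra hcon
  push_neg at hcon
  have hsep : B.SeparatingLeft := by
    intro w hw
    by_contra hw0
    obtain ⟨x, hx⟩ := hcon w hw0
    exact hx (hw x)
  set b := finBasis ℂ W
  have hdet := (LinearMap.separatingLeft_iff_det_ne_zero b).mp hsep
  set M := LinearMap.toMatrix₂ b b B with hM
  have hT : M.transpose = -M := by
    ext i j
    simp [hM, Matrix.transpose_apply, hB (b j) (b i)]
  have h1 : M.det = -M.det := by
    conv_lhs => rw [← Matrix.det_transpose, hT, Matrix.det_neg]
    rw [Fintype.card_fin, hodd.neg_one_pow]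
    ring
  have : M.det = 0 := by linear_combination (h1) / 2
  exact hdet this


/-- If `A` is an anticommutative 2-step nilpotent complex algebra of even
dimension `n` with `dim A² = 1`, then `dim ann(A) ≥ 2`. -/
theorem ann_dim_ge_two_of_even_dim {V : Type*} [AddCommGroup V] [Module ℂ V]
    [FiniteDimensional ℂ V] (μ : V →ₗ[ℂ] V →ₗ[ℂ] V)
    (hanti : ∀ x y : V, μ x y = - μ y x)
    (h2 : ∀ x y z : V, μ (μ x y) z = 0 ∧ μ x (μ y z) = 0)
    (hEven : Even (finrank ℂ V))
    (hsq : finrank ℂ (Submodule.span ℂ {z : V | ∃ x y : V, μ x y = z}) = 1) :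
    2 ≤ finrank ℂ (annihilator μ) := by
  set S := Submodule.span ℂ {z : V | ∃ x y : V, μ x y = z} with hS
  -- every element of S annihilates on the left
  have hSann : ∀ s ∈ S, ∀ y : V, μ s y = 0 := by
    intro s hs y
    have : S ≤ LinearMap.ker (μ.flip y) := by
      rw [hS, Submodule.span_le]
      rintro z ⟨a, b, rfl⟩
      simp [LinearMap.mem_ker, LinearMap.flip_apply, (h2 a b y).1]
    simpa using this hs
  -- get nonzero e spanning S
  have hSne : S ≠ ⊥ := by
    intro h; rw [h] at hsq; simp at hsq
  obtain ⟨e, heS, he⟩ := Submodule.exists_mem_ne_zero_of_ne_bot hSne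
  have hspanS : Submodule.span ℂ {e} = S := by
    apply Submodule.eq_of_le_of_finrank_le
    · rw [Submodule.span_le]; simpa using heS
    · rw [hsq, finrank_span_singleton he]
  -- complement W of span{e}
  obtain ⟨W, hW⟩ := Submodule.exists_isCompl (Submodule.span ℂ {e})
  -- functional f with f s • e = s on span{e}
  let g : (Submodule.span ℂ {e}) →ₗ[ℂ] ℂ :=
    (LinearEquiv.toSpanNonzeroSingleton ℂ V e he).symm.toLinearMap
  let f : V →ₗ[ℂ] ℂ := g.comp (Submodule.linearProjOfIsCompl _ W hW)
  have hf : ∀ s (hs : s ∈ Submodule.span ℂ {e}), f s • e = s := by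
    intro s hs
    have hproj : Submodule.linearProjOfIsCompl _ W hW s = ⟨s, hs⟩ :=
      Submodule.linearProjOfIsCompl_apply_left hW ⟨s, hs⟩
    have : f s • e = ((LinearEquiv.toSpanNonzeroSingleton ℂ V e he) (f s) : V) := by
      simp [LinearEquiv.toSpanNonzeroSingleton_apply]
    rw [this]
    show ((LinearEquiv.toSpanNonzeroSingleton ℂ V e he)
      ((LinearEquiv.toSpanNonzeroSingleton ℂ V e he).symm
        (Submodule.linearProjOfIsCompl _ W hW s)) : V) = s
    rw [LinearEquiv.apply_symm_apply, hproj]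
  -- bilinear form B with μ x y = B x y • e
  let B : V →ₗ[ℂ] V →ₗ[ℂ] ℂ := μ.compr₂ f
  have hmuB : ∀ x y : V, μ x y = B x y • e := by
    intro x y
    have hmem : μ x y ∈ Submodule.span ℂ {e} := by
      rw [hspanS]; exact Submodule.subset_span ⟨x, y, rfl⟩
    exact (hf _ hmem).symm
  have hBskew : ∀ x y : V, B x y = - B y x := by
    intro x y
    show f (μ x y) = - f (μ y x)
    rw [hanti x y, map_neg]
  -- restricted form on W and degeneracy
  have hfinW : Odd (finrank ℂ W) := by
    have hadd := Submodule.finrank_add_eq_of_isCompl hW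
    rw [finrank_span_singleton he] at hadd
    have : finrank ℂ V = finrank ℂ W + 1 := by omega
    rw [this, Nat.even_add_one] at hEven
    exact Nat.not_even_iff_odd.mp hEven
  let BW : W →ₗ[ℂ] W →ₗ[ℂ] ℂ := B.compl₁₂ W.subtype W.subtype
  obtain ⟨w, hw0, hwB⟩ := skew_degenerate_of_odd BW
    (fun x y => hBskew x y) hfinW
  -- e annihilates everything
  have heann : e ∈ annihilator μ := by
    intro x
    exact ⟨hSann e heS x, by rw [hanti x e, hSann e heS x, neg_zero]⟩
  -- B w vanishes on all of V
  have hmue : ∀ y : V, μ y e = 0 := fun y => by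
    rw [hanti y e, hSann e heS y, neg_zero]
  have hwannL : ∀ v : V, μ (w : V) v = 0 := by
    intro v
    have hv : v ∈ Submodule.span ℂ {e} ⊔ W := by
      rw [hW.sup_eq_top]; trivial
    obtain ⟨s, hs, t, ht, rfl⟩ := Submodule.mem_sup.mp hv
    obtain ⟨c, rfl⟩ := Submodule.mem_span_singleton.mp hs
    have h1 : μ (w : V) t = 0 := by
      rw [hmuB (w : V) t]
      have : B (w : V) t = BW w ⟨t, ht⟩ := rfl
      rw [this, hwB ⟨t, ht⟩, zero_smul]
    have h2' : μ (w : V) e = 0 := by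
      rw [hanti (w : V) e, hSann e heS (w : V), neg_zero]
    rw [map_add, map_smul, h2', h1, smul_zero, add_zero]
  have hwann : (w : V) ∈ annihilator μ := by
    intro x
    exact ⟨hwannL x, by rw [hanti x (w : V), hwannL x, neg_zero]⟩
  -- linear independence of e and w
  have hwV : (w : V) ≠ 0 := by
    simpa using hw0
  have hind : LinearIndependent ℂ ![e, (w : V)] := by
    rw [LinearIndependent.pair_iff]
    intro s t hst
    have hmem : s • e = -(t • (w : V)) := by linear_combination (norm := module) hst
    have hsmem : s • e ∈ Submodule.span ℂ {e} ⊓ W := by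
      constructor
      · exact Submodule.smul_mem _ s (Submodule.mem_span_singleton_self e)
      · rw [hmem]; exact Submodule.neg_mem _ (Submodule.smul_mem _ t w.2)
    rw [hW.inf_eq_bot] at hsmem
    have hs0 : s = 0 := by
      rcases smul_eq_zero.mp hsmem with h | h
      · exact h
      · exact absurd h he
    refine ⟨hs0, ?_⟩
    rw [hs0, zero_smul, zero_add] at hst
    rcases smul_eq_zero.mp hst with h | h
    · exact h
    · exact absurd h hwV
  -- conclude
  let v : Fin 2 → annihilator μ := ![⟨e, heann⟩, ⟨(w : V), hwann⟩]
  have hindv : LinearIndependent ℂ v := by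
    apply LinearIndependent.of_comp (annihilator μ).subtype
    convert hind
    ext i
    fin_cases i <;> rfl
    rfl
  simpa using hindv.fintype_card_le_finrank
end

section
/- The 5-dimensional complex algebra 𝒜⁴₀₅ with nonzero products e₁e₁ = e₂, e₁e₂ = e₄, e₁e₃ = e₄, e₂e₁ = e₄, e₃e₃ = e₄ (and e₅ annihilating everything) degenerates to the algebra 𝒜⁴₀₆(1) with products e₁e₁ = e₂, e₁e₂ = e₄, e₁e₃ = e₄, e₂e₁ = e₄; a parametric basis is E₁ᵗ = t e₁, E₂ᵗ = t² e₂, E₃ᵗ = t² e₃, E₄ᵗ = t³ e₄, E₅ᵗ = e₅. -/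
open Module Filter Topology

/-- Structure constants of the algebra `𝒜⁴₀₅` (basis `e₁,…,e₅`, 0-indexed):
`e₁e₁ = e₂`, `e₁e₂ = e₄`, `e₁e₃ = e₄`, `e₂e₁ = e₄`, `e₃e₃ = e₄`. -/
noncomputable def cA : Fin 5 → Fin 5 → Fin 5 → ℂ := fun i j m =>
  if i = 0 ∧ j = 0 ∧ m = 1 then 1
  else if i = 0 ∧ j = 1 ∧ m = 3 then 1
  else if i = 0 ∧ j = 2 ∧ m = 3 then 1
  else if i = 1 ∧ j = 0 ∧ m = 3 then 1
  else if i = 2 ∧ j = 2 ∧ m = 3 then 1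
  else 0

/-- Structure constants of the algebra `𝒜⁴₀₆(1)`:
`e₁e₁ = e₂`, `e₁e₂ = e₄`, `e₁e₃ = e₄`, `e₂e₁ = e₄`. -/
noncomputable def cB : Fin 5 → Fin 5 → Fin 5 → ℂ := fun i j m =>
  if i = 0 ∧ j = 0 ∧ m = 1 then 1
  else if i = 0 ∧ j = 1 ∧ m = 3 then 1
  else if i = 0 ∧ j = 2 ∧ m = 3 then 1
  else if i = 1 ∧ j = 0 ∧ m = 3 then 1
  else 0

/-- The multiplication of `𝒜⁴₀₅` on `ℂ⁵`. -/
noncomputable def mulA (x y : Fin 5 → ℂ) : Fin 5 → ℂ :=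
  fun m => ∑ i, ∑ j, x i * y j * cA i j m

/-- The parametric basis `E₁ᵗ = t e₁, E₂ᵗ = t² e₂, E₃ᵗ = t² e₃, E₄ᵗ = t³ e₄, E₅ᵗ = e₅`. -/
noncomputable def E (t : ℂ) : Fin 5 → (Fin 5 → ℂ) :=
  fun i => (![t, t ^ 2, t ^ 2, t ^ 3, 1] i) • (Pi.single i 1 : Fin 5 → ℂ)

set_option maxHeartbeats 2000000 in
/-- `𝒜⁴₀₅` degenerates to `𝒜⁴₀₆(1)` via the parametric basis
`(t e₁, t² e₂, t² e₃, t³ e₄, e₅)`: for every `t ≠ 0` the family `Eᵗ` is a basis, and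
the structure constants of `𝒜⁴₀₅` in this basis converge, as `t → 0`, to the structure
constants of `𝒜⁴₀₆(1)`. -/
theorem A405_degenerates_to_A406 :
    ∃ c : ℂ → Fin 5 → Fin 5 → Fin 5 → ℂ,
      (∀ t : ℂ, t ≠ 0 → LinearIndependent ℂ (E t) ∧
        ∀ i j : Fin 5, mulA (E t i) (E t j) = ∑ m, c t i j m • E t m) ∧
      (∀ i j m : Fin 5,
        Tendsto (fun t => c t i j m) (𝓝[≠] (0 : ℂ)) (𝓝 (cB i j m))) := by
  classical
  refine ⟨fun t i j m => if i = 2 ∧ j = 2 ∧ m = 3 then t else cB i j m, ?_, ?_⟩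
  · intro t ht
    constructor
    · have h1 : E t = fun i =>
          (Units.mk0 (![t, t ^ 2, t ^ 2, t ^ 3, 1] i)
            (by fin_cases i <;> simp [ht])) • (Pi.basisFun ℂ (Fin 5)) i := by
        funext i
        simp [E, Pi.basisFun_apply]
      rw [h1]
      exact (Pi.basisFun ℂ (Fin 5)).linearIndependent.units_smul _
    · intro i j
      funext m
      fin_cases i <;> fin_cases j <;> fin_cases m <;>
        simp [mulA, E, cA, cB, Fin.sum_univ_five, Pi.single_apply] <;> ring
  · intro i j m
    by_cases h : i = 2 ∧ j = 2 ∧ m = 3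
    · have : cB i j m = 0 := by obtain ⟨h1, h2, h3⟩ := h; subst h1; subst h2; subst h3; simp [cB]
      rw [this]
      simp only [h, if_true]
      exact tendsto_id.mono_left nhdsWithin_le_nhds
    · simp only [h, if_false]
      exact tendsto_const_nhds
end
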